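/- arXiv:1605.06290 — 4 statements merged into one kernel-verified Lean document; each statement's English description precedes it below -/
import Mathlib

section
/- For any complex vector h = (h_1, ..., h_M) with M ≥ 1, every complex number d with max{2 max_i |h_i| − ∑_i |h_i|, 0} ≤ |d| ≤ ∑_i |h_i| can be written as d = ∑_{i=1}^M h_i e^{jθ_i} for some phases θ_i ∈ [0, 2π). That is, the attainable set equals the full annulus. -/
open Complex Finset

/-- Intersection of circles: given `t` with `||d| - a| ≤ t ≤ |d| + a`, there is
`z` with `|z| = t` and `|d - z| = a`. -/
lemma circle_inter (d : ℂ) (a t : ℝ) (ha : 0 ≤ a) (ht : 0 ≤ t)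
    (h1 : ‖d‖ - a ≤ t) (h2 : a - ‖d‖ ≤ t)
    (h3 : t ≤ ‖d‖ + a) :
    ∃ z : ℂ, ‖z‖ = t ∧ ‖d - z‖ = a := by
  by_cases hd : d = 0
  · subst hd
    simp only [norm_zero] at h1 h2 h3
    have hta : t = a := le_antisymm (by linarith) (by linarith)
    refine ⟨(t : ℝ), by rw [Complex.norm_real, Real.norm_of_nonneg ht], ?_⟩
    rw [hta]
    simp [Complex.norm_real, _root_.abs_of_nonneg ha]
  · have hD : 0 < ‖d‖ := norm_pos_iff.mpr hd
    set D := ‖d‖ with hDdef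
    by_cases ht0 : t = 0
    · subst ht0
      refine ⟨0, by simp, ?_⟩
      have : D = a := le_antisymm (by linarith) (by linarith)
      simpa using this
    · have htpos : 0 < t := lt_of_le_of_ne ht (Ne.symm ht0)
      set c : ℝ := (D ^ 2 + t ^ 2 - a ^ 2) / (2 * D * t) with hc
      have hc2 : c ^ 2 ≤ 1 := by
        rw [div_pow, div_le_one (by positivity)]
        have hA : (D - t) ^ 2 ≤ a ^ 2 := by nlinarith
        have hB : a ^ 2 ≤ (D + t) ^ 2 := by nlinarith
        nlinarith [mul_nonneg (sub_nonneg.mpr hA) (sub_nonneg.mpr hB)]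
      set s : ℝ := Real.sqrt (1 - c ^ 2) with hs
      have hs2 : s ^ 2 = 1 - c ^ 2 := Real.sq_sqrt (by linarith)
      set z : ℂ := (d / (D : ℝ)) * ((t * c : ℝ) + (t * s : ℝ) * I) with hz
      have habsdiv : ‖d / (D : ℝ)‖ = 1 := by
        rw [norm_div, Complex.norm_real, Real.norm_of_nonneg hD.le]
        exact div_self hD.ne'
      have key : ∀ x y : ℝ, ‖(x : ℂ) + (y : ℝ) * I‖ = Real.sqrt (x ^ 2 + y ^ 2) := by
        intro x y
        rw [Complex.norm_def, Complex.normSq_add_mul_I]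
      refine ⟨z, ?_, ?_⟩
      · rw [hz, norm_mul, habsdiv, one_mul, key]
        have : (t * c) ^ 2 + (t * s) ^ 2 = t ^ 2 := by nlinarith
        rw [this, Real.sqrt_sq ht]
      · have hDne : ((D : ℝ) : ℂ) ≠ 0 := by exact_mod_cast hD.ne'
        have hdz : d - z = (d / (D : ℝ)) * ((D - t * c : ℝ) + (-(t * s) : ℝ) * I) := by
          rw [hz]
          field_simp
          push_cast
          ring
        rw [hdz, norm_mul, habsdiv, one_mul, key]
        have : (D - t * c) ^ 2 + (-(t * s)) ^ 2 = a ^ 2 := by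
          have h2dtc : 2 * D * t * c = D ^ 2 + t ^ 2 - a ^ 2 := by
            rw [hc]; field_simp
          nlinarith
        rw [this, Real.sqrt_sq ha]

/-- Induction core: attainability with per-index hypotheses. -/
lemma attain : ∀ (M : ℕ) (h : Fin M → ℂ) (d : ℂ),
    (∀ i, 2 * ‖h i‖ ≤ ‖d‖ + ∑ i, ‖h i‖) →
    ‖d‖ ≤ ∑ i, ‖h i‖ →
    ∃ θ : Fin M → ℝ, d = ∑ i, h i * Complex.exp ((θ i : ℂ) * Complex.I) := by
  intro M
  induction M with
  | zero =>
      intro h d _ hhi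
      simp only [Finset.univ_eq_empty, Finset.sum_empty] at hhi ⊢
      have : d = 0 := by
        have := norm_nonneg d
        have : ‖d‖ = 0 := le_antisymm hhi this
        exact norm_eq_zero.mp this
      exact ⟨fun i => 0, this⟩
  | succ M ih =>
      intro h d hlo hhi
      set h' : Fin M → ℂ := fun i => h i.castSucc with hh'
      set a : ℝ := ‖h (Fin.last M)‖ with hadef
      set R' : ℝ := ∑ i, ‖h' i‖ with hR'
      have hsum : ∑ i, ‖h i‖ = R' + a := by
        rw [hR', Fin.sum_univ_castSucc (f := fun i => ‖h i‖)]
      have ha0 : 0 ≤ a := norm_nonneg _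
      have hR'0 : 0 ≤ R' := Finset.sum_nonneg fun i _ => norm_nonneg _
      set t : ℝ := min (‖d‖ + a) R' with htdef
      have ht0 : 0 ≤ t := le_min (by positivity) hR'0
      have h1 : ‖d‖ - a ≤ t := by
        refine le_min (by linarith [norm_nonneg d]) ?_
        rw [hsum] at hhi; linarith
      have h2 : a - ‖d‖ ≤ t := by
        refine le_min (by linarith [norm_nonneg d]) ?_
        have := hlo (Fin.last M)
        rw [hsum] at this
        linarith
      have h3 : t ≤ ‖d‖ + a := min_le_left _ _
      obtain ⟨z, hz1, hz2⟩ := circle_inter d a t ha0 ht0 h1 h2 h3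
      have hztR' : ‖z‖ ≤ R' := hz1 ▸ min_le_right _ _
      have hzlo : ∀ i, 2 * ‖h' i‖ ≤ ‖z‖ + ∑ i, ‖h' i‖ := by
        intro i
        rw [hz1, ← hR']
        have hle : ‖h' i‖ ≤ R' :=
          Finset.single_le_sum (f := fun i => ‖h' i‖)
            (fun j _ => norm_nonneg _) (Finset.mem_univ i)
        have h4 : 2 * ‖h' i‖ ≤ ‖d‖ + a + R' := by
          have := hlo i.castSucc
          rw [hsum] at this
          simpa [hh'] using (by linarith : 2 * ‖h i.castSucc‖ ≤ ‖d‖ + a + R')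
        have h5 : 2 * ‖h' i‖ ≤ R' + R' := by linarith
        rcases le_total (‖d‖ + a) R' with hc | hc
        · rw [htdef, min_eq_left hc]; linarith
        · rw [htdef, min_eq_right hc]; linarith
      obtain ⟨θ', hθ'⟩ := ih h' z hzlo hztR'
      set φ : ℝ := Complex.arg ((d - z) / h (Fin.last M)) with hφ
      have hlast : h (Fin.last M) * Complex.exp ((φ : ℂ) * Complex.I) = d - z := by
        by_cases h0 : h (Fin.last M) = 0
        · have hdz : d - z = 0 := by
            have h9 : ‖d - z‖ = 0 := by rw [hz2, hadef, h0, norm_zero]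
            exact norm_eq_zero.mp h9
          rw [h0, hdz, zero_mul]
        · have hane : a ≠ 0 := fun hc => h0 (norm_eq_zero.mp (hadef ▸ hc))
          set u : ℂ := (d - z) / h (Fin.last M) with hu
          have habsu : ‖u‖ = 1 := by
            rw [hu, norm_div, hz2, ← hadef, div_self hane]
          have : (‖u‖ : ℂ) * Complex.exp ((Complex.arg u : ℂ) * Complex.I) = u :=
            Complex.norm_mul_exp_arg_mul_I u
          rw [habsu] at this
          push_cast at this
          rw [one_mul] at this
          rw [hφ, this, hu, mul_div_cancel₀ _ h0]
      refine ⟨Fin.snoc θ' φ, ?_⟩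
      rw [Fin.sum_univ_castSucc (f := fun i => h i * Complex.exp (((Fin.snoc θ' φ : Fin (M+1) → ℝ) i : ℂ) * Complex.I))]
      simp only [Fin.snoc_castSucc, Fin.snoc_last]
      rw [hlast]
      have hzz : ∑ x : Fin M, h x.castSucc * Complex.exp ((θ' x : ℂ) * Complex.I) = z := hθ'.symm
      rw [hzz]
      ring

/-- Every point of the annulus is attainable by CE signals. -/
theorem stmt_1 (M : ℕ) (hM : 1 ≤ M) (h : Fin M → ℂ) (d : ℂ)
    (hlo : max (2 * (Finset.univ.sup' (Finset.univ_nonempty_iff.mpr ⟨⟨0, hM⟩⟩)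
          (fun i => ‖h i‖)) - ∑ i, ‖h i‖) 0
        ≤ ‖d‖)
    (hhi : ‖d‖ ≤ ∑ i, ‖h i‖) :
    ∃ θ : Fin M → ℝ, (∀ i, θ i ∈ Set.Ico 0 (2 * Real.pi)) ∧
      d = ∑ i, h i * Complex.exp ((θ i : ℂ) * Complex.I) := by
  have hlo' : ∀ i, 2 * ‖h i‖ ≤ ‖d‖ + ∑ i, ‖h i‖ := by
    intro i
    have h1 : 2 * (Finset.univ.sup' (Finset.univ_nonempty_iff.mpr ⟨⟨0, hM⟩⟩)
        (fun i => ‖h i‖)) - ∑ i, ‖h i‖ ≤ ‖d‖ :=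
      le_trans (le_max_left _ _) hlo
    have h2 : ‖h i‖ ≤ Finset.univ.sup' (Finset.univ_nonempty_iff.mpr ⟨⟨0, hM⟩⟩)
        (fun i => ‖h i‖) :=
      Finset.le_sup' (fun i => ‖h i‖) (Finset.mem_univ i)
    linarith
  obtain ⟨θ, hθ⟩ := attain M h d hlo' hhi
  have hπ : (0 : ℝ) < 2 * Real.pi := by positivity
  refine ⟨fun i => toIcoMod hπ 0 (θ i), fun i => ?_, ?_⟩
  · have := toIcoMod_mem_Ico hπ 0 (θ i)
    simpa using this
  · rw [hθ]
    refine Finset.sum_congr rfl fun i _ => ?_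
    congr 1
    have hmod : toIcoMod hπ 0 (θ i) = θ i - (toIcoDiv hπ 0 (θ i) : ℤ) * (2 * Real.pi) := by
      rw [toIcoMod, zsmul_eq_mul]
    show Complex.exp ((θ i : ℂ) * Complex.I) = Complex.exp (((toIcoMod hπ 0 (θ i) : ℝ) : ℂ) * Complex.I)
    rw [hmod]
    push_cast
    rw [sub_mul, Complex.exp_sub]
    have h1 : Complex.exp (((toIcoDiv hπ 0 (θ i) : ℤ) : ℂ) * (2 * (Real.pi : ℂ)) * Complex.I) = 1 := by
      rw [mul_assoc]
      exact_mod_cast Complex.exp_int_mul_two_pi_mul_I _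
    rw [h1, div_one]
end

section
/- Given a complex vector h ∈ ℂ^M and a finite nonempty set S ⊂ ℂ of desired constellation points, there exists a scaling factor α > 0 such that α·S is contained in the annulus {d : r ≤ |d| ≤ R} (with R = ∑|h_i| > 0 and r = max{2 max|h_i| − R, 0}) if and only if r/R ≤ (min_{s∈S} |s|)/(max_{s∈S} |s|), assuming all s ∈ S are nonzero. -/
open Complex Finset

/-- Feasibility of a constellation S in the annulus iff the radius-ratio condition holds. -/
theorem stmt_3 (M : ℕ) (hM : 1 ≤ M) (h : Fin M → ℂ) (hh : h ≠ 0)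
    (S : Finset ℂ) (hS : S.Nonempty) (hS0 : ∀ s ∈ S, s ≠ 0) :
    (∃ α : ℝ, 0 < α ∧ ∀ s ∈ S,
        max (2 * (Finset.univ.sup' (Finset.univ_nonempty_iff.mpr ⟨⟨0, hM⟩⟩)
              (fun i => ‖h i‖)) - ∑ i, ‖h i‖) 0
          ≤ ‖(α : ℂ) * s‖ ∧
        ‖(α : ℂ) * s‖ ≤ ∑ i, ‖h i‖) ↔
    (max (2 * (Finset.univ.sup' (Finset.univ_nonempty_iff.mpr ⟨⟨0, hM⟩⟩)
          (fun i => ‖h i‖)) - ∑ i, ‖h i‖) 0)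
        / (∑ i, ‖h i‖)
      ≤ (S.inf' hS (‖·‖)) / (S.sup' hS (‖·‖)) := by
  set R : ℝ := ∑ i, ‖h i‖ with hR
  set r : ℝ := max (2 * (Finset.univ.sup' (Finset.univ_nonempty_iff.mpr ⟨⟨0, hM⟩⟩)
          (fun i => ‖h i‖)) - R) 0 with hr
  set m : ℝ := S.inf' hS (‖·‖) with hm
  set K : ℝ := S.sup' hS (‖·‖) with hK
  have hRpos : 0 < R := by
    obtain ⟨i, hi⟩ : ∃ i, h i ≠ 0 := by
      by_contra hc
      push_neg at hc
      exact hh (funext hc)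
    exact Finset.sum_pos' (fun j _ => norm_nonneg _)
      ⟨i, Finset.mem_univ i, (norm_pos_iff.mpr hi)⟩
  obtain ⟨s₀, hs₀, hs₀K⟩ := Finset.exists_mem_eq_sup' hS (‖·‖)
  obtain ⟨s₁, hs₁, hs₁m⟩ := Finset.exists_mem_eq_inf' hS (‖·‖)
  have hKpos : 0 < K := by rw [hK, hs₀K]; exact norm_pos_iff.mpr (hS0 _ hs₀)
  have hmpos : 0 < m := by rw [hm, hs₁m]; exact norm_pos_iff.mpr (hS0 _ hs₁)
  have habs : ∀ (α : ℝ), 0 < α → ∀ s : ℂ, ‖(α : ℂ) * s‖ = α * ‖s‖ := by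
    intro α hα s
    rw [norm_mul, Complex.norm_of_nonneg hα.le]
  constructor
  · rintro ⟨α, hα, hfeas⟩
    have h1 : r ≤ α * m := by
      rw [hm, hs₁m, ← habs α hα]; exact (hfeas _ hs₁).1
    have h2 : α * K ≤ R := by
      rw [hK, hs₀K, ← habs α hα]; exact (hfeas _ hs₀).2
    rw [div_le_div_iff₀ hRpos hKpos]
    calc r * K ≤ (α * m) * K := by nlinarith
      _ = (α * K) * m := by ring
      _ ≤ R * m := by nlinarith
      _ = m * R := by ring
  · intro hcond
    rw [div_le_div_iff₀ hRpos hKpos] at hcond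
    refine ⟨R / K, div_pos hRpos hKpos, fun s hsS => ?_⟩
    have hsm : m ≤ ‖s‖ := Finset.inf'_le _ hsS
    have hsK : ‖s‖ ≤ K := Finset.le_sup' _ hsS
    rw [habs _ (div_pos hRpos hKpos)]
    constructor
    · rw [div_mul_eq_mul_div, le_div_iff₀ hKpos]
      nlinarith
    · rw [div_mul_eq_mul_div, div_le_iff₀ hKpos]
      nlinarith
end

section
/- Let H be an M_r × M_t complex matrix with rank(H) ≥ 2, and let h_1, ..., h_{M_t} denote its columns. Then for any index l ∈ {1, ..., M_t}, there exists a vector u ∈ ℂ^{M_r} such that u^H (2 h_l − ∑_{i=1}^{M_t} h_i) = 0 and ∑_{i=1}^{M_t} |u^H h_i| > 0. -/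
open Complex Finset ComplexConjugate

/-- If rank(H) ≥ 2, for any column index l there is u orthogonal to 2h_l − ∑ h_i with uᴴH ≠ 0. -/
theorem stmt_4 (Mr Mt : ℕ) (H : Matrix (Fin Mr) (Fin Mt) ℂ) (hrank : 2 ≤ H.rank)
    (l : Fin Mt) :
    ∃ u : Fin Mr → ℂ,
      (∑ j, conj (u j) * (2 * H j l - ∑ i, H j i)) = 0 ∧
      0 < ∑ i, ‖∑ j, conj (u j) * H j i‖ := by
  set v : Fin Mr → ℂ := fun j => 2 * H j l - ∑ i, H j i with hv
  let f : (Fin Mr → ℂ) →ₗ[ℂ] ℂ :=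
    { toFun := fun w => ∑ j, w j * v j
      map_add' := by intro a b; simp [add_mul, Finset.sum_add_distrib]
      map_smul' := by intro c a; simp [Finset.mul_sum, mul_assoc]
    }
  let g := H.transpose.mulVecLin
  -- there exists w ∈ ker f with g w ≠ 0
  have hex : ∃ w, f w = 0 ∧ g w ≠ 0 := by
    by_contra hcon
    push_neg at hcon
    have hle : LinearMap.ker f ≤ LinearMap.ker g := by
      intro w hw
      exact LinearMap.mem_ker.mpr (hcon w (LinearMap.mem_ker.mp hw))
    have h1 : Module.finrank ℂ (LinearMap.ker f) ≤ Module.finrank ℂ (LinearMap.ker g) :=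
      Submodule.finrank_mono hle
    have hf : Module.finrank ℂ (LinearMap.range f) + Module.finrank ℂ (LinearMap.ker f)
        = Mr := by
      rw [LinearMap.finrank_range_add_finrank_ker]
      simp
    have hg : Module.finrank ℂ (LinearMap.range g) + Module.finrank ℂ (LinearMap.ker g)
        = Mr := by
      rw [LinearMap.finrank_range_add_finrank_ker]
      simp
    have hrg : Module.finrank ℂ (LinearMap.range g) = H.rank := by
      have : Module.finrank ℂ (LinearMap.range g) = H.transpose.rank := rfl
      rw [this, Matrix.rank_transpose]
    have hrf : Module.finrank ℂ (LinearMap.range f) ≤ 1 := by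
      have := Submodule.finrank_le (LinearMap.range f)
      simpa using this
    omega
  obtain ⟨w, hw0, hwne⟩ := hex
  obtain ⟨i, hi⟩ := Function.ne_iff.mp hwne
  refine ⟨fun j => conj (w j), ?_, ?_⟩
  · simpa [f, v] using hw0
  · have hival : (∑ j, conj (conj (w j)) * H j i) ≠ 0 := by
      have : g w i = ∑ j, w j * H j i := by
        simp [g, Matrix.mulVecLin_apply, Matrix.mulVec, dotProduct,
          Matrix.transpose_apply, Matrix.vecMul, mul_comm]
      rw [show (∑ j, conj (conj (w j)) * H j i) = ∑ j, w j * H j i by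
        simp]
      rwa [← this]
    refine Finset.sum_pos' (fun i _ => norm_nonneg _) ⟨i, Finset.mem_univ i, ?_⟩
    exact norm_pos_iff.mpr hival
end

section
/- Let H ∈ ℂ^{M_r × M_t} with rank(H) ≥ 2, and let τ ∈ [0,1]. Then there exists a unit vector u ∈ ℂ^{M_r} (‖u‖_2 = 1) such that max_i |u^H h_i| ≤ ((τ+1)/2) ∑_i |u^H h_i| and ∑_i |u^H h_i| > 0, where h_i are the columns of H. -/
open Complex Finset ComplexConjugate


noncomputable def Sfun {n : ℕ} (z : Fin n → ℂ) : ℝ := ∑ k, ‖z k‖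

def Good {n : ℕ} (z : Fin n → ℂ) : Prop :=
  (∀ i, ‖z i‖ ≤ (1/2) * Sfun z) ∧ 0 < Sfun z

lemma Sfun_nonneg {n : ℕ} (z : Fin n → ℂ) : 0 ≤ Sfun z :=
  Finset.sum_nonneg fun _ _ => norm_nonneg _

lemma term_le {n : ℕ} (z : Fin n → ℂ) (i : Fin n) : ‖z i‖ ≤ Sfun z :=
  Finset.single_le_sum (fun _ _ => norm_nonneg _) (mem_univ i)

lemma pair_le {n : ℕ} (z : Fin n → ℂ) {i j : Fin n} (h : i ≠ j) :
    ‖z i‖ + ‖z j‖ ≤ Sfun z := by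
  have h2 := Finset.sum_le_sum_of_subset_of_nonneg (f := fun k => ‖z k‖)
    (Finset.subset_univ ({i, j} : Finset (Fin n))) (fun _ _ _ => norm_nonneg _)
  simpa [Finset.sum_pair h, Sfun] using h2

lemma Sfun_pos {n : ℕ} {z : Fin n → ℂ} (hz : z ≠ 0) : 0 < Sfun z := by
  obtain ⟨i, hi⟩ := Function.ne_iff.mp hz
  exact lt_of_lt_of_le (norm_pos_iff.mpr hi) (term_le z i)

lemma dom_pos {n : ℕ} {z : Fin n → ℂ} {i : Fin n}
    (h : (1/2) * Sfun z < ‖z i‖) : 0 < ‖z i‖ := by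
  have := term_le z i; linarith

lemma dom_other {n : ℕ} {z : Fin n → ℂ} {i j : Fin n}
    (h : (1/2) * Sfun z < ‖z i‖) (hij : j ≠ i) :
    ‖z j‖ < (1/2) * Sfun z := by
  have := pair_le z hij; linarith

lemma path_lemma {n : ℕ} (v w : Fin n → ℂ)
    (hind : ∀ a b : ℂ, a • v + b • w = 0 → a = 0 ∧ b = 0)
    {i j : Fin n} (hij : i ≠ j)
    (hvi : (1/2) * Sfun v < ‖v i‖)
    (hwj : (1/2) * Sfun w < ‖w j‖) :
    ∃ a b : ℂ, Good (a • v + b • w) := by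
  set f : ℝ → ℝ := fun t => ‖(1 - (t:ℂ)) * v i + (t:ℂ) * w i‖ -
      (1/2) * ∑ k, ‖(1 - (t:ℂ)) * v k + (t:ℂ) * w k‖ with hfdef
  have hc : Continuous f := by
    apply Continuous.sub
    · exact continuous_norm.comp (by fun_prop)
    · exact Continuous.mul continuous_const (continuous_finset_sum _ (fun k _ =>
        continuous_norm.comp (by fun_prop)))
  have hf0 : f 0 = ‖v i‖ - (1/2) * Sfun v := by simp [hfdef, Sfun]
  have hf1 : f 1 = ‖w i‖ - (1/2) * Sfun w := by simp [hfdef, Sfun]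
  have h0 : 0 < f 0 := by rw [hf0]; linarith
  have h1 : f 1 < 0 := by rw [hf1]; have := dom_other hwj hij; linarith
  obtain ⟨t, ht, hft⟩ : ∃ t ∈ Set.Icc (0:ℝ) 1, f t = 0 := by
    have hsub := intermediate_value_Icc' (by norm_num : (0:ℝ) ≤ 1) hc.continuousOn
    have : (0:ℝ) ∈ Set.Icc (f 1) (f 0) := ⟨le_of_lt h1, le_of_lt h0⟩
    obtain ⟨t, ht, hft⟩ := hsub this
    exact ⟨t, ht, hft⟩
  refine ⟨((1 - t : ℝ) : ℂ), ((t : ℝ) : ℂ), ?_⟩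
  set z : Fin n → ℂ := ((1 - t : ℝ) : ℂ) • v + ((t : ℝ) : ℂ) • w with hz
  have hzk : ∀ k, z k = (1 - (t:ℂ)) * v k + (t:ℂ) * w k := by
    intro k; simp only [hz, Pi.add_apply, Pi.smul_apply, smul_eq_mul]; push_cast; ring
  have hzi : ‖z i‖ = (1/2) * Sfun z := by
    have : Sfun z = ∑ k, ‖(1 - (t:ℂ)) * v k + (t:ℂ) * w k‖ := by
      unfold Sfun; exact Finset.sum_congr rfl (fun k _ => by rw [hzk k])
    rw [hzk i, this]
    have := hft
    simp only [hfdef] at this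
    linarith
  have hz0 : z ≠ 0 := by
    intro h
    obtain ⟨ha, hb⟩ := hind _ _ (hz ▸ h)
    rw [Complex.ofReal_eq_zero] at ha hb
    linarith [ha, hb]
  have hSz := Sfun_pos hz0
  refine ⟨?_, hSz⟩
  intro k
  by_contra hk
  push_neg at hk
  have hki : k ≠ i := by
    intro h; rw [h, hzi] at hk; exact lt_irrefl _ hk
  have := pair_le z hki.symm  -- abs z i + abs z k ≤ Sfun z  (needs i ≠ k)
  -- pair_le z (h : i ≠ k) : abs (z i) + abs (z k) ≤ Sfun z
  linarith

lemma key {n : ℕ} (v w : Fin n → ℂ)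
    (hind : ∀ a b : ℂ, a • v + b • w = 0 → a = 0 ∧ b = 0) :
    ∃ a b : ℂ, Good (a • v + b • w) := by
  have hv0 : v ≠ 0 := by
    intro h
    have := (hind 1 0 (by simp [h])).1
    simp at this
  have hw0 : w ≠ 0 := by
    intro h
    have := (hind 0 1 (by simp [h])).2
    simp at this
  by_cases hv : ∀ k, ‖v k‖ ≤ (1/2) * Sfun v
  · refine ⟨1, 0, ?_⟩
    have : (1:ℂ) • v + (0:ℂ) • w = v := by simp
    rw [this]; exact ⟨hv, Sfun_pos hv0⟩
  push_neg at hv; obtain ⟨i, hi⟩ := hv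
  by_cases hw : ∀ k, ‖w k‖ ≤ (1/2) * Sfun w
  · refine ⟨0, 1, ?_⟩
    have : (0:ℂ) • v + (1:ℂ) • w = w := by simp
    rw [this]; exact ⟨hw, Sfun_pos hw0⟩
  push_neg at hw; obtain ⟨j, hj⟩ := hw
  by_cases hij : i = j
  · subst hij
    have hvi : v i ≠ 0 := by
      intro h
      have := dom_pos hi
      rw [h] at this; simp at this
    set c : ℂ := w i / v i with hc
    set w' : Fin n → ℂ := (-c) • v + w with hw'
    have hind' : ∀ a b : ℂ, a • v + b • w' = 0 → a = 0 ∧ b = 0 := by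
      intro a b hab
      have h2 : (a - b * c) • v + b • w = 0 := by
        rw [← hab, hw']; module
      obtain ⟨h3, h4⟩ := hind _ _ h2
      exact ⟨by rw [h4] at h3; simpa using h3, h4⟩
    have hw'i : w' i = 0 := by
      simp only [hw', hc, Pi.add_apply, Pi.smul_apply, smul_eq_mul]
      field_simp
      ring
    have hw'0 : w' ≠ 0 := by
      intro h
      have h2 : (-c) • v + (1:ℂ) • w = 0 := by rw [← h, hw']; module
      have := (hind' 0 1 (by rw [← h]; simp)).2
      simp at this
    by_cases hgood : ∀ k, ‖w' k‖ ≤ (1/2) * Sfun w'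
    · refine ⟨-c, 1, ?_⟩
      have heq : (-c) • v + (1:ℂ) • w = w' := by rw [hw']; module
      rw [heq]
      exact ⟨hgood, Sfun_pos hw'0⟩
    push_neg at hgood; obtain ⟨j, hj'⟩ := hgood
    have hij' : i ≠ j := by
      rintro rfl
      rw [hw'i] at hj'
      simp at hj'
      have := Sfun_nonneg w'
      linarith
    obtain ⟨a, b, hab⟩ := path_lemma v w' hind' hij' hi hj'
    refine ⟨a - b * c, b, ?_⟩
    have : (a - b * c) • v + b • w = a • v + b • w' := by rw [hw']; module
    rw [this]; exact hab
  · exact path_lemma v w hind hij hi hj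

/-- Feasibility of Problem (P2): if rank(H) ≥ 2 and τ ∈ [0,1] there is a unit vector u
    with ‖uᴴH‖_∞ ≤ ((τ+1)/2)‖uᴴH‖_1 and ‖uᴴH‖_1 > 0. -/
theorem stmt_6 (Mr Mt : ℕ) (H : Matrix (Fin Mr) (Fin Mt) ℂ) (hrank : 2 ≤ H.rank)
    (τ : ℝ) (hτ : τ ∈ Set.Icc (0 : ℝ) 1) :
    ∃ u : Fin Mr → ℂ,
      Real.sqrt (∑ j, ‖u j‖ ^ 2) = 1 ∧
      (∀ i₀ : Fin Mt, ‖∑ j, conj (u j) * H j i₀‖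
          ≤ ((τ + 1) / 2) * ∑ i, ‖∑ j, conj (u j) * H j i‖) ∧
      0 < ∑ i, ‖∑ j, conj (u j) * H j i‖ := by
  obtain ⟨hτ0, hτ1⟩ := hτ
  -- linear independent pair in the range of H.transpose.mulVecLin
  have hrank' : 2 ≤ Module.finrank ℂ (LinearMap.range (Matrix.mulVecLin H.transpose)) := by
    have : H.transpose.rank = Module.finrank ℂ (LinearMap.range (Matrix.mulVecLin H.transpose)) := rfl
    rw [← this, Matrix.rank_transpose]; exact hrank
  obtain ⟨f, hf⟩ := exists_linearIndependent_of_le_finrank (R := ℂ)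
    (M := LinearMap.range (Matrix.mulVecLin H.transpose)) hrank'
  set v : Fin Mt → ℂ := (f 0 : Fin Mt → ℂ) with hv
  set w : Fin Mt → ℂ := (f 1 : Fin Mt → ℂ) with hw
  have hind : ∀ a b : ℂ, a • v + b • w = 0 → a = 0 ∧ b = 0 := by
    intro a b hab
    have hsum : (∑ k, ![a, b] k • f k) = 0 := by
      apply Subtype.ext
      push_cast [Fin.sum_univ_two]
      simpa [hv, hw] using hab
    have h := Fintype.linearIndependent_iff.mp hf ![a, b] hsum
    exact ⟨by simpa using h 0, by simpa using h 1⟩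
  -- preimages
  obtain ⟨x₁, hx₁⟩ := LinearMap.mem_range.mp (f 0).2
  obtain ⟨x₂, hx₂⟩ := LinearMap.mem_range.mp (f 1).2
  set u₁ : Fin Mr → ℂ := star x₁ with hu₁def
  set u₂ : Fin Mr → ℂ := star x₂ with hu₂def
  have hu₁ : ∀ i, (∑ j, conj (u₁ j) * H j i) = v i := by
    intro i
    rw [hv, ← hx₁]
    simp [Matrix.mulVecLin_apply, Matrix.mulVec, Matrix.vecMul, dotProduct,
      Matrix.transpose_apply, hu₁def, mul_comm]
  have hu₂ : ∀ i, (∑ j, conj (u₂ j) * H j i) = w i := by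
    intro i
    rw [hw, ← hx₂]
    simp [Matrix.mulVecLin_apply, Matrix.mulVec, Matrix.vecMul, dotProduct,
      Matrix.transpose_apply, hu₂def, mul_comm]
  obtain ⟨a, b, hgood⟩ := key v w hind
  set u₀ : Fin Mr → ℂ := fun j => conj a * u₁ j + conj b * u₂ j with hu₀def
  have hu₀ : ∀ i, (∑ j, conj (u₀ j) * H j i) = a * v i + b * w i := by
    intro i
    rw [← hu₁ i, ← hu₂ i, Finset.mul_sum, Finset.mul_sum, ← Finset.sum_add_distrib]
    refine Finset.sum_congr rfl (fun j _ => ?_)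
    simp [hu₀def, map_add, map_mul, add_mul, mul_assoc]
  have hzk : ∀ i, (a • v + b • w) i = a * v i + b * w i := by
    intro i; simp
  obtain ⟨hG1, hG2⟩ := hgood
  set S₀ : ℝ := Sfun (a • v + b • w) with hS₀
  -- u₀ ≠ 0
  have hu₀ne : u₀ ≠ 0 := by
    intro h
    have hz : ∀ i, (a • v + b • w) i = 0 := by
      intro i; rw [hzk i, ← hu₀ i, h]; simp
    have : S₀ = 0 := by
      rw [hS₀]; unfold Sfun
      exact Finset.sum_eq_zero fun k _ => by rw [hz k]; simp
    linarith
  -- normalization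
  have hsum_pos : 0 < ∑ j, ‖u₀ j‖ ^ 2 := by
    obtain ⟨j, hj⟩ := Function.ne_iff.mp hu₀ne
    refine Finset.sum_pos' (fun k _ => by positivity) ⟨j, Finset.mem_univ j, ?_⟩
    have : 0 < ‖u₀ j‖ := norm_pos_iff.mpr hj
    positivity
  set r : ℝ := Real.sqrt (∑ j, ‖u₀ j‖ ^ 2) with hr
  have hrpos : 0 < r := Real.sqrt_pos.mpr hsum_pos
  have hr2 : r ^ 2 = ∑ j, ‖u₀ j‖ ^ 2 := Real.sq_sqrt hsum_pos.le
  have habs0 : ∀ j, ‖((r⁻¹ : ℝ) : ℂ) * u₀ j‖ ^ 2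
      = r⁻¹ ^ 2 * ‖u₀ j‖ ^ 2 := by
    intro j
    rw [norm_mul, Complex.norm_real, Real.norm_eq_abs, _root_.abs_of_nonneg (inv_nonneg.mpr hrpos.le)]
    ring
  have hφ : ∀ i, (∑ j, conj (((r⁻¹ : ℝ) : ℂ) * u₀ j) * H j i)
      = ((r⁻¹ : ℝ) : ℂ) * (a * v i + b * w i) := by
    intro i
    rw [← hu₀ i, Finset.mul_sum]
    refine Finset.sum_congr rfl (fun j _ => ?_)
    rw [map_mul, Complex.conj_ofReal, mul_assoc]
  have habs : ∀ i, ‖∑ j, conj (((r⁻¹ : ℝ) : ℂ) * u₀ j) * H j i‖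
      = r⁻¹ * ‖(a • v + b • w) i‖ := by
    intro i
    rw [hφ i, norm_mul, Complex.norm_real, Real.norm_eq_abs, _root_.abs_of_nonneg (inv_nonneg.mpr hrpos.le), hzk i]
  have hSsum : (∑ i, ‖∑ j, conj (((r⁻¹ : ℝ) : ℂ) * u₀ j) * H j i‖)
      = r⁻¹ * S₀ := by
    rw [hS₀]; unfold Sfun
    rw [Finset.mul_sum]
    exact Finset.sum_congr rfl (fun i _ => habs i)
  refine ⟨fun j => ((r⁻¹ : ℝ) : ℂ) * u₀ j, ?_, ?_, ?_⟩
  · simp only [habs0]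
    rw [← Finset.mul_sum, ← hr2, show r⁻¹ ^ 2 * r ^ 2 = 1 from by field_simp, Real.sqrt_one]
  · intro i₀
    beta_reduce
    rw [habs i₀, hSsum]
    have h2 : r⁻¹ * ‖(a • v + b • w) i₀‖ ≤ r⁻¹ * ((1/2) * S₀) :=
      mul_le_mul_of_nonneg_left (hG1 i₀) (inv_nonneg.mpr hrpos.le)
    have h3 : (1/2 : ℝ) ≤ (τ + 1) / 2 := by linarith
    have h4 : 0 ≤ r⁻¹ * S₀ := mul_nonneg (inv_nonneg.mpr hrpos.le) hG2.le
    calc r⁻¹ * ‖(a • v + b • w) i₀‖ ≤ r⁻¹ * ((1/2) * S₀) := h2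
      _ = (1/2) * (r⁻¹ * S₀) := by ring
      _ ≤ ((τ + 1) / 2) * (r⁻¹ * S₀) := mul_le_mul_of_nonneg_right h3 h4
  · beta_reduce
    rw [hSsum]
    exact mul_pos (inv_pos.mpr hrpos) hG2
end
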